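/- arXiv:2405.09168 — 2 statements merged into one kernel-verified Lean document; each statement's English description precedes it below -/
import Mathlib

section
/- Let V be a vector space over ℂ and N : V → V a nilpotent linear map (Nᵏ = 0 for some k), so that all power series in N reduce to finite sums. Let K, w ∈ V and define L := exp(−iN)(K) + F(−iN)(w) = Σ_{n} ((−i)ⁿ/n!) Nⁿ(K) + Σ_{n} ((−i)ⁿ/(n+1)!) Nⁿ(w). Then L − K − w = G(N)(L − K) − (i/2) N(L + K), where G(N) := Σ_{n≥1} (−1)^{n+1} (B_{2n}/(2n)!) N^{2n}. (Operator form of Corollary 3.4, the all-orders LV obstruction identity L − K − ∂U = G(O_U)(L − K) − (i/2) O_U(L + K), with the obstruction map O_U replaced by the linear map N.) -/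
open scoped Nat
open PowerSeries

namespace Stmt9Aux

variable {V : Type*} [AddCommGroup V] [Module ℂ V]

/-- Evaluate a power series at a nilpotent endomorphism by truncating at `k`. -/
noncomputable def ev (N : V →ₗ[ℂ] V) (k : ℕ) (f : ℂ⟦X⟧) : Module.End ℂ V :=
  Polynomial.aeval N (trunc k f)

theorem Npow (N : V →ₗ[ℂ] V) (k : ℕ) (hN : N ^ k = 0) {j : ℕ} (hj : k ≤ j) :
    N ^ j = 0 := by
  obtain ⟨c, rfl⟩ := Nat.exists_eq_add_of_le hj
  rw [pow_add, hN, zero_mul]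

theorem aeval_congr (N : V →ₗ[ℂ] V) (k : ℕ) (hN : N ^ k = 0) {P Q : Polynomial ℂ}
    (h : ∀ n, n < k → P.coeff n = Q.coeff n) :
    Polynomial.aeval N P = Polynomial.aeval N Q := by
  set m := max P.natDegree Q.natDegree + 1 + k with hm
  have hP : P.natDegree < m := by
    have := le_max_left P.natDegree Q.natDegree; omega
  have hQ : Q.natDegree < m := by
    have := le_max_right P.natDegree Q.natDegree; omega
  rw [Polynomial.aeval_eq_sum_range' hP, Polynomial.aeval_eq_sum_range' hQ]
  refine Finset.sum_congr rfl fun n _ => ?_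
  by_cases hn : n < k
  · rw [h n hn]
  · rw [Npow N k hN (by omega), smul_zero, smul_zero]

theorem ev_eq_sum (N : V →ₗ[ℂ] V) (k : ℕ) (hN : N ^ k = 0) (hk : 0 < k)
    {m : ℕ} (hm : k ≤ m) (f : ℂ⟦X⟧) :
    ev N k f = ∑ n ∈ Finset.range m, (PowerSeries.coeff n f) • N ^ n := by
  obtain ⟨k, rfl⟩ := Nat.exists_eq_succ_of_ne_zero hk.ne'
  rw [ev, Polynomial.aeval_eq_sum_range' (n := k + 1) (natDegree_trunc_lt f k)]
  rw [Finset.sum_subset (Finset.range_subset_range.2 hm)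
    (fun n _ hn => by rw [Npow N (k+1) hN (by simpa using hn), smul_zero])]
  refine Finset.sum_congr rfl fun n _ => ?_
  rw [coeff_trunc]
  by_cases hn : n < k + 1
  · rw [if_pos hn]
  · rw [if_neg hn, Npow N (k+1) hN (by omega), smul_zero, smul_zero]

theorem ev_apply (N : V →ₗ[ℂ] V) (k : ℕ) (hN : N ^ k = 0) (hk : 0 < k)
    {m : ℕ} (hm : k ≤ m) (f : ℂ⟦X⟧) (v : V) :
    ev N k f v = ∑ n ∈ Finset.range m, (PowerSeries.coeff n f) • (N ^ n) v := by
  rw [ev_eq_sum N k hN hk hm f, LinearMap.sum_apply]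
  simp [LinearMap.smul_apply]

theorem ev_mul (N : V →ₗ[ℂ] V) (k : ℕ) (hN : N ^ k = 0) (f g : ℂ⟦X⟧) :
    ev N k (f * g) = ev N k f * ev N k g := by
  rw [ev, ev, ev, ← map_mul]
  refine aeval_congr N k hN fun n hn => ?_
  rw [coeff_trunc, if_pos hn, PowerSeries.coeff_mul, Polynomial.coeff_mul]
  refine Finset.sum_congr rfl fun p hp => ?_
  obtain ⟨hp1, hp2⟩ : p.1 ≤ n ∧ p.2 ≤ n := by
    have := Finset.HasAntidiagonal.mem_antidiagonal.1 hp; omega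
  rw [coeff_trunc, coeff_trunc, if_pos (by omega), if_pos (by omega)]

theorem ev_one (N : V →ₗ[ℂ] V) (k : ℕ) (hN : N ^ k = 0) (hk : 0 < k) :
    ev N k 1 = 1 := by
  rw [ev_eq_sum N k hN hk le_rfl, Finset.sum_eq_single 0]
  · simp
  · intro n _ hn; simp [PowerSeries.coeff_one, hn]
  · intro h; exact absurd (Finset.mem_range.2 hk) h

theorem ev_sub (N : V →ₗ[ℂ] V) (k : ℕ) (hN : N ^ k = 0) (hk : 0 < k) (f g : ℂ⟦X⟧) :
    ev N k (f - g) = ev N k f - ev N k g := by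
  simp [ev_eq_sum N k hN hk le_rfl, sub_smul, Finset.sum_sub_distrib]

theorem ev_add (N : V →ₗ[ℂ] V) (k : ℕ) (hN : N ^ k = 0) (hk : 0 < k) (f g : ℂ⟦X⟧) :
    ev N k (f + g) = ev N k f + ev N k g := by
  simp [ev_eq_sum N k hN hk le_rfl, add_smul, Finset.sum_add_distrib]

theorem ev_smul (N : V →ₗ[ℂ] V) (k : ℕ) (hN : N ^ k = 0) (hk : 0 < k) (c : ℂ) (f : ℂ⟦X⟧) :
    ev N k (c • f) = c • ev N k f := by
  simp [ev_eq_sum N k hN hk le_rfl, Finset.smul_sum, smul_smul]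

theorem ev_X (N : V →ₗ[ℂ] V) (k : ℕ) (hN : N ^ k = 0) (hk : 0 < k) :
    ev N k X = N := by
  rw [ev_eq_sum N k hN hk (le_of_lt (Nat.lt_succ_self k)) X,
    Finset.sum_eq_single 1]
  · simp
  · intro n _ hn; simp [PowerSeries.coeff_X, hn]
  · intro h; exact absurd (Finset.mem_range.2 (by omega)) h


section Series

open Complex PowerSeries

noncomputable def SA : ℂ⟦X⟧ := rescale (-Complex.I) (PowerSeries.exp ℂ)
noncomputable def SE : ℂ⟦X⟧ := rescale Complex.I (PowerSeries.exp ℂ)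
noncomputable def SF : ℂ⟦X⟧ :=
  rescale (-Complex.I) (PowerSeries.mk fun n => (((n+1)! : ℂ))⁻¹)
noncomputable def SBr : ℂ⟦X⟧ := rescale Complex.I (bernoulliPowerSeries ℂ)
noncomputable def SG : ℂ⟦X⟧ :=
  1 - PowerSeries.C (Complex.I/2) * X - SBr

theorem coeff_SA (n : ℕ) : coeff n SA = (-Complex.I) ^ n / (n ! : ℂ) := by
  rw [SA, coeff_rescale, coeff_exp]
  rw [eq_ratCast]
  push_cast
  ring

theorem coeff_SF (n : ℕ) : coeff n SF = (-Complex.I) ^ n / ((n+1)! : ℂ) := by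
  rw [SF, coeff_rescale, coeff_mk]
  rw [div_eq_mul_inv]

theorem hAE : SA * SE = 1 := by
  have h := PowerSeries.exp_mul_exp_neg_eq_one (A := ℂ)
  have h2 := congrArg (rescale Complex.I) h
  rw [map_mul, map_one] at h2
  rw [show (PowerSeries.evalNegHom (PowerSeries.exp ℂ)) = rescale (-1 : ℂ) (PowerSeries.exp ℂ) from rfl] at h2
  rw [rescale_rescale] at h2
  rw [show (-1 : ℂ) * Complex.I = -Complex.I by ring] at h2
  rw [SA, SE, mul_comm]
  exact h2

theorem hBrE : SBr * (SE - 1) = PowerSeries.C Complex.I * X := by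
  have h := congrArg (rescale Complex.I) (bernoulliPowerSeries_mul_exp_sub_one ℂ)
  rw [map_mul, map_sub, map_one, rescale_X] at h
  exact h

theorem hSE0 : SE ≠ 0 := by
  intro h
  have := hAE
  rw [h, mul_zero] at this
  exact one_ne_zero this.symm

theorem hBrA : SBr * (SA - 1) = -(PowerSeries.C Complex.I * X * SA) := by
  apply mul_right_cancel₀ hSE0
  linear_combination (SBr + PowerSeries.C Complex.I * X) * hAE - hBrE

theorem hXF : PowerSeries.C (-Complex.I) * X * SF = SA - 1 := by
  have base : (X : ℂ⟦X⟧) * (PowerSeries.mk fun n => (((n+1)! : ℂ))⁻¹)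
      = PowerSeries.exp ℂ - 1 := by
    ext n
    cases n with
    | zero => simp [coeff_exp]
    | succ n =>
      rw [coeff_succ_X_mul, coeff_mk, map_sub, coeff_exp, eq_ratCast,
        PowerSeries.coeff_one, if_neg n.succ_ne_zero]
      push_cast
      rw [sub_zero, inv_eq_one_div]
  have h := congrArg (rescale (-Complex.I)) base
  rw [map_mul, map_sub, map_one, rescale_X] at h
  rw [SA, SF, ← h]

theorem hCIX0 : (PowerSeries.C Complex.I * X : ℂ⟦X⟧) ≠ 0 := by
  apply mul_ne_zero _ PowerSeries.X_ne_zero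
  intro h
  have := congrArg (PowerSeries.constantCoeff) h
  simp [Complex.I_ne_zero] at this

theorem hXF' : -(PowerSeries.C Complex.I) * X * SF = SA - 1 := by
  rw [← map_neg]; exact hXF

theorem hBrF : SBr * SF = SA := by
  apply mul_left_cancel₀ hCIX0
  linear_combination (-SBr) * hXF' - hBrA

theorem hc2 : PowerSeries.C (Complex.I/2) + PowerSeries.C (Complex.I/2)
    = PowerSeries.C Complex.I := by
  rw [← map_add]
  norm_num

theorem hIdent1 : SA - 1 = SG * (SA - 1)
    - PowerSeries.C (Complex.I/2) * (X * (SA + 1)) := by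
  rw [SG]
  linear_combination hBrA + (X * SA) * hc2

theorem hIdent2 : SF - 1 = SG * SF
    - PowerSeries.C (Complex.I/2) * (X * SF) := by
  rw [SG]
  linear_combination hBrF + (X * SF) * hc2 - hXF'


theorem coeff_SBr (n : ℕ) :
    coeff n SBr = Complex.I ^ n * ((bernoulli n : ℂ) / (n ! : ℂ)) := by
  rw [SBr, coeff_rescale, bernoulliPowerSeries, coeff_mk, eq_ratCast]
  push_cast
  ring

theorem coeff_SG_zero : coeff 0 SG = 0 := by
  rw [SG, map_sub, map_sub, coeff_SBr, PowerSeries.coeff_one,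
    PowerSeries.coeff_C_mul, PowerSeries.coeff_X]
  norm_num

theorem coeff_SG_odd {n : ℕ} (hn : Odd n) : coeff n SG = 0 := by
  rw [SG, map_sub, map_sub, coeff_SBr, PowerSeries.coeff_one,
    PowerSeries.coeff_C_mul, PowerSeries.coeff_X]
  rcases eq_or_ne n 1 with rfl | h1
  · rw [bernoulli_one]
    norm_num
    ring
  · have hodd0 : n ≠ 0 := by rintro rfl; exact (Nat.not_odd_zero) hn
    have hb : bernoulli n = 0 := by
      rw [bernoulli_eq_bernoulli'_of_ne_one h1]
      exact bernoulli'_eq_zero_of_odd hn (by omega)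
    rw [hb, if_neg hodd0, if_neg h1]
    push_cast
    ring

theorem coeff_SG_even {n : ℕ} (hn : 1 ≤ n) :
    coeff (2 * n) SG
      = (-1 : ℂ) ^ (n + 1) * ((bernoulli (2 * n) : ℚ) : ℂ) / ((2 * n)! : ℂ) := by
  rw [SG, map_sub, map_sub, coeff_SBr, PowerSeries.coeff_one,
    PowerSeries.coeff_C_mul, PowerSeries.coeff_X]
  rw [if_neg (by omega), if_neg (by omega), pow_mul, Complex.I_sq]
  ring

end Series

end Stmt9Aux

open Stmt9Aux

/-- Operator form of Corollary 3.4 for a nilpotent map `N` (all series reduce to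
finite sums): if `L = exp(−iN)(K) + F(−iN)(w)`, then
`L − K − w = G(N)(L − K) − (i/2) N(L + K)` with
`G(N) = Σ_{n≥1} (−1)^{n+1} (B_{2n}/(2n)!) N^{2n}`. -/
theorem stmt_9 (V : Type*) [AddCommGroup V] [Module ℂ V]
    (N : V →ₗ[ℂ] V) (k : ℕ) (hN : N ^ k = 0) (K w L : V)
    (hL : L = (∑ n ∈ Finset.range k, ((-Complex.I) ^ n / (n ! : ℂ)) • ((N ^ n) K))
        + ∑ n ∈ Finset.range k, ((-Complex.I) ^ n / ((n + 1)! : ℂ)) • ((N ^ n) w)) :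
    L - K - w =
      (∑ n ∈ Finset.Icc 1 k,
          ((-1 : ℂ) ^ (n + 1) * ((bernoulli (2 * n) : ℚ) : ℂ) / ((2 * n)! : ℂ)) •
            ((N ^ (2 * n)) (L - K)))
        - (Complex.I / 2) • (N (L + K)) := by
  rcases Nat.eq_zero_or_pos k with rfl | hk
  · have hV : ∀ v : V, v = 0 := by
      intro v
      have h1 : (N ^ 0) v = 0 := by rw [hN]; rfl
      simpa using h1
    exact (hV _).trans (hV _).symm
  have hLdef : L = ev N k SA K + ev N k SF w := by
    rw [hL, ev_apply N k hN hk le_rfl, ev_apply N k hN hk le_rfl]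
    congr 1
    · exact Finset.sum_congr rfl fun n _ => by rw [coeff_SA]
    · exact Finset.sum_congr rfl fun n _ => by rw [coeff_SF]
  have hGs : ∀ v : V,
      (∑ n ∈ Finset.Icc 1 k,
          ((-1 : ℂ) ^ (n + 1) * ((bernoulli (2 * n) : ℚ) : ℂ) / ((2 * n)! : ℂ)) •
            ((N ^ (2 * n)) v)) = ev N k SG v := by
    intro v
    rw [ev_apply N k hN hk (show k ≤ 2*k+1 by omega)]
    have hsub : (Finset.Icc 1 k).image (fun n => 2*n) ⊆ Finset.range (2*k+1) := by
      intro m hm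
      obtain ⟨n, hn, rfl⟩ := Finset.mem_image.1 hm
      have := Finset.mem_Icc.1 hn
      exact Finset.mem_range.2 (by omega)
    have hz : ∀ m ∈ Finset.range (2*k+1),
        m ∉ (Finset.Icc 1 k).image (fun n => 2*n) →
        (PowerSeries.coeff m SG) • (N ^ m) v = 0 := by
      intro m hm hm'
      rcases Nat.even_or_odd m with he | ho
      · obtain ⟨n, rfl⟩ := he
        rcases Nat.eq_zero_or_pos n with rfl | hn1
        · have h0 : (0 : ℕ) + 0 = 0 := rfl
          rw [h0, coeff_SG_zero, zero_smul]
        · exfalso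
          apply hm'
          refine Finset.mem_image.2 ⟨n, Finset.mem_Icc.2 ⟨hn1, ?_⟩, by omega⟩
          have := Finset.mem_range.1 hm
          omega
      · rw [coeff_SG_odd ho, zero_smul]
    rw [← Finset.sum_subset hsub hz,
      Finset.sum_image (fun x _ y _ h => by omega)]
    exact Finset.sum_congr rfl fun n hn => by
      rw [coeff_SG_even (Finset.mem_Icc.1 hn).1]
  have hLK : L - K = ev N k (SA - 1) K + ev N k SF w := by
    rw [hLdef, ev_sub N k hN hk, LinearMap.sub_apply, ev_one N k hN hk,
      Module.End.one_apply]
    abel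
  have hLpK : L + K = ev N k (SA + 1) K + ev N k SF w := by
    rw [hLdef, ev_add N k hN hk, LinearMap.add_apply, ev_one N k hN hk,
      Module.End.one_apply]
    abel
  have hLKw : L - K - w = ev N k (SA - 1) K + ev N k (SF - 1) w := by
    rw [hLdef, ev_sub N k hN hk, ev_sub N k hN hk, LinearMap.sub_apply,
      LinearMap.sub_apply, ev_one N k hN hk, Module.End.one_apply]
    abel
  have hId1' : SG * (SA - 1) - (Complex.I/2) • (PowerSeries.X * (SA + 1)) = SA - 1 := by
    rw [PowerSeries.smul_eq_C_mul]; exact hIdent1.symm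
  have hId2' : SG * SF - (Complex.I/2) • (PowerSeries.X * SF) = SF - 1 := by
    rw [PowerSeries.smul_eq_C_mul]; exact hIdent2.symm
  calc L - K - w = ev N k (SA - 1) K + ev N k (SF - 1) w := hLKw
    _ = ev N k (SG * (SA - 1) - (Complex.I/2) • (PowerSeries.X * (SA + 1))) K
        + ev N k (SG * SF - (Complex.I/2) • (PowerSeries.X * SF)) w := by
          rw [hId1', hId2']
    _ = (ev N k SG (ev N k (SA - 1) K)
          - (Complex.I/2) • (ev N k PowerSeries.X (ev N k (SA + 1) K)))
        + (ev N k SG (ev N k SF w)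
          - (Complex.I/2) • (ev N k PowerSeries.X (ev N k SF w))) := by
          simp only [ev_sub N k hN hk, ev_smul N k hN hk, ev_mul N k hN,
            ev_add N k hN hk, ev_one N k hN hk, LinearMap.sub_apply,
            LinearMap.add_apply, LinearMap.smul_apply, Module.End.mul_apply,
            Module.End.one_apply, map_sub, map_add, smul_sub, smul_add]
    _ = ev N k SG (L - K) - (Complex.I/2) • (ev N k PowerSeries.X (L + K)) := by
          rw [hLK, hLpK, map_add, map_add, smul_add]
          abel
    _ = _ := by
          rw [← hGs (L - K), ev_X N k hN hk]
end

section
/- Let E be a complex Banach space, M : E → E a continuous linear map, and K, w ∈ E. Define ℓ : ℝ → E by ℓ(t) := exp(−itM)(K) + Σ_{n≥0} ((−i)ⁿ t^{n+1}/(n+1)!) Mⁿ(w). Then ℓ is differentiable with ℓ′(t) = w − i M(ℓ(t)) for all t ∈ ℝ, and it satisfies the boundary values ℓ(0) = K and ℓ(1) = exp(−iM)(K) + F(−iM)(w). (The computational core of Proposition 3.1: the interpolating interaction ℓ(t) = exp(−itO_U)(K) + F(−itO_U)(t ∂U) solves the differential equation ℓ̇(t) = ∂U − iO_U(ℓ(t))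 with ℓ(0) = K and ℓ(1) = L.) -/
open scoped Nat
open NormedSpace

private lemma aux_norm_pow_apply {E : Type*} [NormedAddCommGroup E] [NormedSpace ℂ E]
    (M : E →L[ℂ] E) (w : E) (n : ℕ) : ‖(M ^ n) w‖ ≤ ‖M‖ ^ n * ‖w‖ := by
  induction n with
  | zero => simp
  | succ n ih =>
    have h1 : (M ^ (n + 1)) w = M ((M ^ n) w) := by rw [pow_succ']; rfl
    calc ‖(M ^ (n + 1)) w‖ = ‖M ((M ^ n) w)‖ := by rw [h1]
      _ ≤ ‖M‖ * ‖(M ^ n) w‖ := M.le_opNorm _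
      _ ≤ ‖M‖ * (‖M‖ ^ n * ‖w‖) := mul_le_mul_of_nonneg_left ih (norm_nonneg M)
      _ = ‖M‖ ^ (n + 1) * ‖w‖ := by ring

private lemma aux_coef_norm (n k m : ℕ) (s : ℝ) :
    ‖(-Complex.I) ^ n * (s : ℂ) ^ k / ((m)! : ℂ)‖ = |s| ^ k / (m)! := by
  simp [norm_div, norm_mul, norm_pow, Complex.norm_real, Real.norm_eq_abs,
    Complex.norm_natCast]

private lemma aux_bound {E : Type*} [NormedAddCommGroup E] [NormedSpace ℂ E]
    (M : E →L[ℂ] E) (w : E) (n : ℕ) {s R : ℝ} (hs : |s| ≤ R) :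
    ‖((-Complex.I) ^ n * (s : ℂ) ^ n / ((n)! : ℂ)) • ((M ^ n) w)‖
      ≤ (R * ‖M‖) ^ n / (n)! * ‖w‖ := by
  rw [norm_smul, aux_coef_norm]
  calc |s| ^ n / (n)! * ‖(M ^ n) w‖ ≤ |s| ^ n / (n)! * (‖M‖ ^ n * ‖w‖) := by
        gcongr
        exact aux_norm_pow_apply M w n
    _ ≤ R ^ n / (n)! * (‖M‖ ^ n * ‖w‖) := by
        gcongr
    _ = (R * ‖M‖) ^ n / (n)! * ‖w‖ := by rw [mul_pow]; ring

private lemma aux_summable_g {E : Type*} [NormedAddCommGroup E] [NormedSpace ℂ E]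
    [CompleteSpace E] (M : E →L[ℂ] E) (w : E) (s : ℝ) :
    Summable (fun n : ℕ => ((-Complex.I) ^ n * (s : ℂ) ^ (n + 1) / ((n + 1)! : ℂ))
      • ((M ^ n) w)) := by
  apply Summable.of_norm_bounded (g := fun n : ℕ => |s| * ((|s| * ‖M‖) ^ n / (n)! * ‖w‖))
    (((Real.summable_pow_div_factorial _).mul_right _).mul_left _)
  intro n
  rw [norm_smul, aux_coef_norm]
  calc |s| ^ (n + 1) / (n + 1)! * ‖(M ^ n) w‖
      ≤ |s| ^ (n + 1) / (n)! * (‖M‖ ^ n * ‖w‖) := by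
        gcongr
        · exact Nat.le_succ n
        · exact aux_norm_pow_apply M w n
    _ = |s| * ((|s| * ‖M‖) ^ n / (n)! * ‖w‖) := by rw [pow_succ, mul_pow]; ring

private lemma aux_summable_d {E : Type*} [NormedAddCommGroup E] [NormedSpace ℂ E]
    [CompleteSpace E] (M : E →L[ℂ] E) (w : E) (t : ℝ) :
    Summable (fun n : ℕ => ((-Complex.I) ^ n * (t : ℂ) ^ n / ((n)! : ℂ)) • ((M ^ n) w)) :=
  Summable.of_norm_bounded ((Real.summable_pow_div_factorial _).mul_right _)
    (fun n => aux_bound M w n le_rfl)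

private lemma aux_hasDerivAt {E : Type*} [NormedAddCommGroup E] [NormedSpace ℂ E]
    (c : ℂ) (v : E) (n : ℕ) (s : ℝ) :
    HasDerivAt (fun s : ℝ => (c * (s : ℂ) ^ (n + 1) / ((n + 1)! : ℂ)) • v)
      ((c * (s : ℂ) ^ n / ((n)! : ℂ)) • v) s := by
  have h1 : HasDerivAt (fun s : ℝ => s ^ (n + 1)) (((n : ℝ) + 1) * s ^ n) s := by
    simpa using hasDerivAt_pow (n + 1) s
  have h2 := h1.smul_const ((c / ((n + 1)! : ℂ)) • v)
  have e1 : ∀ y : ℝ, (y ^ (n + 1)) • ((c / ((n + 1)! : ℂ)) • v)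
      = (c * (y : ℂ) ^ (n + 1) / ((n + 1)! : ℂ)) • v := by
    intro y
    rw [← smul_one_smul ℂ (y ^ (n + 1) : ℝ), smul_smul]
    congr 1
    rw [Complex.real_smul, mul_one]
    push_cast
    ring
  have e2 : (((n : ℝ) + 1) * s ^ n) • ((c / ((n + 1)! : ℂ)) • v)
      = (c * (s : ℂ) ^ n / ((n)! : ℂ)) • v := by
    rw [← smul_one_smul ℂ (((n : ℝ) + 1) * s ^ n), smul_smul]
    congr 1
    rw [Complex.real_smul, mul_one]
    have hn : ((n)! : ℂ) ≠ 0 := Nat.cast_ne_zero.mpr (Nat.factorial_ne_zero n)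
    have hn1 : ((n : ℂ) + 1) ≠ 0 := by
      have h : (((n + 1 : ℕ)) : ℂ) ≠ 0 := Nat.cast_ne_zero.mpr (Nat.succ_ne_zero n)
      simpa using h
    rw [Nat.factorial_succ]
    push_cast
    field_simp
  simp only [e1] at h2
  simpa only [e2] using h2

private lemma aux_tsum_deriv {E : Type*} [NormedAddCommGroup E] [NormedSpace ℂ E]
    [CompleteSpace E] (M : E →L[ℂ] E) (w : E) (t : ℝ) :
    HasDerivAt (fun s : ℝ => ∑' n : ℕ,
        ((-Complex.I) ^ n * (s : ℂ) ^ (n + 1) / ((n + 1)! : ℂ)) • ((M ^ n) w))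
      (∑' n : ℕ, ((-Complex.I) ^ n * (t : ℂ) ^ n / ((n)! : ℂ)) • ((M ^ n) w)) t := by
  set R : ℝ := |t| + 1 with hR
  have htR : t ∈ Metric.ball (0 : ℝ) R := by
    rw [Metric.mem_ball, Real.dist_eq, sub_zero]
    exact lt_add_one _
  exact hasDerivAt_tsum_of_isPreconnected
    ((Real.summable_pow_div_factorial (R * ‖M‖)).mul_right ‖w‖)
    Metric.isOpen_ball (convex_ball (0:ℝ) R).isPreconnected
    (fun n y _ => aux_hasDerivAt ((-Complex.I) ^ n) ((M ^ n) w) n y)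
    (fun n y hy => aux_bound M w n (by
      have := Metric.mem_ball.mp hy
      rw [Real.dist_eq, sub_zero] at this
      linarith))
    htR (aux_summable_g M w t) htR

private lemma aux_value {E : Type*} [NormedAddCommGroup E] [NormedSpace ℂ E]
    [CompleteSpace E] (M : E →L[ℂ] E) (w : E) (t : ℝ) :
    ∑' n : ℕ, ((-Complex.I) ^ n * (t : ℂ) ^ n / ((n)! : ℂ)) • ((M ^ n) w)
      = w - Complex.I • M (∑' n : ℕ,
          ((-Complex.I) ^ n * (t : ℂ) ^ (n + 1) / ((n + 1)! : ℂ)) • ((M ^ n) w)) := by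
  have hsg := aux_summable_g M w t
  have hsd := aux_summable_d M w t
  have hsgM : Summable (fun n : ℕ =>
      M (((-Complex.I) ^ n * (t : ℂ) ^ (n + 1) / ((n + 1)! : ℂ)) • ((M ^ n) w))) :=
    hsg.map M M.continuous
  have hMS : M (∑' n : ℕ, ((-Complex.I) ^ n * (t : ℂ) ^ (n + 1) / ((n + 1)! : ℂ))
        • ((M ^ n) w))
      = ∑' n : ℕ, M (((-Complex.I) ^ n * (t : ℂ) ^ (n + 1) / ((n + 1)! : ℂ))
        • ((M ^ n) w)) :=
    ContinuousLinearMap.map_tsum M hsg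
  have hterm : ∀ n : ℕ,
      ((-Complex.I) ^ (n + 1) * (t : ℂ) ^ (n + 1) / ((n + 1)! : ℂ)) • ((M ^ (n + 1)) w)
        = -(Complex.I • M (((-Complex.I) ^ n * (t : ℂ) ^ (n + 1) / ((n + 1)! : ℂ))
            • ((M ^ n) w))) := by
    intro n
    have hMn : M ((M ^ n) w) = (M ^ (n + 1)) w := by rw [pow_succ']; rfl
    rw [ContinuousLinearMap.map_smul, hMn, smul_smul, ← neg_smul]
    congr 1
    ring
  rw [Summable.tsum_eq_zero_add hsd]
  have h0 : ((-Complex.I) ^ 0 * (t : ℂ) ^ 0 / ((0)! : ℂ)) • ((M ^ 0) w) = w := by simp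
  rw [h0]
  have hshift : ∑' n : ℕ,
      ((-Complex.I) ^ (n + 1) * (t : ℂ) ^ (n + 1) / ((n + 1)! : ℂ)) • ((M ^ (n + 1)) w)
      = -(Complex.I • M (∑' n : ℕ,
          ((-Complex.I) ^ n * (t : ℂ) ^ (n + 1) / ((n + 1)! : ℂ)) • ((M ^ n) w))) := by
    rw [hMS, ← Summable.tsum_const_smul Complex.I hsgM, ← tsum_neg]
    exact tsum_congr hterm
  rw [hshift, sub_eq_add_neg]

/-- The computational core of Proposition 3.1: the interpolation
`ℓ(t) = exp(−itM)(K) + F(−itM)(tw)` solves `ℓ̇(t) = w − iM(ℓ(t))` with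
boundary values `ℓ(0) = K` and `ℓ(1) = exp(−iM)(K) + F(−iM)(w)`. -/
theorem stmt_10 (E : Type*) [NormedAddCommGroup E] [NormedSpace ℂ E] [CompleteSpace E]
    (M : E →L[ℂ] E) (K w : E) (ℓ : ℝ → E)
    (hℓ : ∀ t : ℝ, ℓ t = (NormedSpace.exp (((-Complex.I) * (t : ℂ)) • M)) K
        + ∑' n : ℕ, ((-Complex.I) ^ n * (t : ℂ) ^ (n + 1) / ((n + 1)! : ℂ)) • ((M ^ n) w)) :
    (∀ t : ℝ, HasDerivAt ℓ (w - Complex.I • (M (ℓ t))) t)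
    ∧ ℓ 0 = K
    ∧ ℓ 1 = (NormedSpace.exp ((-Complex.I) • M)) K
        + ∑' n : ℕ, ((-Complex.I) ^ n / ((n + 1)! : ℂ)) • ((M ^ n) w) := by
  have hA : ∀ s : ℝ, exp (((-Complex.I) * (s : ℂ)) • M) = exp (s • ((-Complex.I) • M)) := by
    intro s
    congr 1
    rw [← smul_one_smul ℂ (s : ℝ) ((-Complex.I) • M), Complex.real_smul, mul_one,
      smul_smul, mul_comm]
  refine ⟨?_, ?_, ?_⟩
  · intro t
    have hfun : ℓ = fun s : ℝ => (exp (s • ((-Complex.I) • M))) K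
        + ∑' n : ℕ, ((-Complex.I) ^ n * (s : ℂ) ^ (n + 1) / ((n + 1)! : ℂ)) • ((M ^ n) w) :=
      funext fun s => by rw [hℓ s, hA s]
    rw [hfun]
    have h1 := ((((ContinuousLinearMap.apply ℂ E) K).restrictScalars ℝ).hasFDerivAt).comp_hasDerivAt
      t (hasDerivAt_exp_smul_const' ((-Complex.I) • M) t)
    have h2 := aux_tsum_deriv M w t
    have h := h1.add h2
    have hval : (((ContinuousLinearMap.apply ℂ E) K).restrictScalars ℝ)
          (((-Complex.I) • M) * exp (t • ((-Complex.I) • M)))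
        + ∑' n : ℕ, ((-Complex.I) ^ n * (t : ℂ) ^ n / ((n)! : ℂ)) • ((M ^ n) w)
        = w - Complex.I • M ((exp (t • ((-Complex.I) • M))) K
            + ∑' n : ℕ, ((-Complex.I) ^ n * (t : ℂ) ^ (n + 1) / ((n + 1)! : ℂ)) • ((M ^ n) w)) := by
      rw [aux_value M w t, map_add, smul_add]
      have he : (((ContinuousLinearMap.apply ℂ E) K).restrictScalars ℝ)
            (((-Complex.I) • M) * exp (t • ((-Complex.I) • M)))
          = -(Complex.I • M ((exp (t • ((-Complex.I) • M))) K)) := by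
        show (((-Complex.I) • M) * exp (t • ((-Complex.I) • M))) K = _
        rw [ContinuousLinearMap.mul_apply, ContinuousLinearMap.smul_apply, neg_smul]
      rw [he]
      abel
    rw [hval] at h
    exact h
  · rw [hℓ 0]
    simp [NormedSpace.exp_zero]
  · rw [hℓ 1]
    norm_num
end
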